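/- arXiv:2006.00106 — 2 statements merged into one kernel-verified Lean document; each statement's English description precedes it below -/
import Mathlib

section
/- Let k ∈ L¹(0,∞) with ‖k‖_{L¹} < 1, let S(t) be the right-translation isometry semigroup on L¹(0,∞), and define ⟨B w, J(w)⟩ := ‖w‖_{L¹}·∫₀^∞ (1 + k(x)) |w(x)| dx for w ∈ L¹. Then for every T > 0 and every y ∈ L¹(0,∞), ∫₀^T ⟨B S(t)y, J(S(t)y)⟩ dt ≥ (T − ‖k‖_{L¹})·‖y‖²_{L¹}. In particular, for T ≥ 1 the observability inequality ∫₀^T ⟨B S(t)y, J(S(t)y)⟩ dt ≥ δ‖y‖² holds with δ = T − ‖k‖_{L¹} > 0. -/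
open MeasureTheory

/-- Right-translation: `(S t y)(ξ) = y(ξ − t)` if `ξ ≥ t`, `0` otherwise. -/
noncomputable def rightShift (t : ℝ) (y : ℝ → ℝ) : ℝ → ℝ :=
  fun ξ => if t ≤ ξ then y (ξ - t) else 0

lemma lint_shift (Z : ℝ → ℝ) (hZ : Measurable Z) (x : ℝ) :
    ∫⁻ t, (‖Z (x - t)‖₊ : ENNReal) ∂volume = ∫⁻ s, (‖Z s‖₊ : ENNReal) ∂volume := by
  have mp : MeasurePreserving (fun t : ℝ => x - t) volume volume := by
    have h1 := (measurePreserving_add_right (volume : Measure ℝ) x).comp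
      (Measure.measurePreserving_neg (volume : Measure ℝ))
    have : (fun t : ℝ => x - t) = (fun t : ℝ => t + x) ∘ (fun t : ℝ => -t) := by
      funext t; simp [Function.comp, sub_eq_neg_add]
    rwa [this]
  exact mp.lintegral_comp hZ.enorm

/-- Observability inequality for `B w = (1+k) w` along the right-translation semigroup,
with the duality pairing `⟨B w, J(w)⟩ = ‖w‖₁ ∫ (1+k)|w|`: for every `T > 0`,
`∫₀^T ⟨B S(t)y, J(S(t)y)⟩ dt ≥ (T − ‖k‖₁) ‖y‖₁²`; in particular for `T ≥ 1` the
constant `δ = T − ‖k‖₁` is positive. -/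
theorem stmt_11 (k : ℝ → ℝ) (hk : IntegrableOn k (Set.Ioi 0))
    (hk1 : ∫ x in Set.Ioi (0:ℝ), |k x| < 1)
    (y : ℝ → ℝ) (hy : IntegrableOn y (Set.Ioi 0)) (T : ℝ) (hT : 0 < T) :
    ((T - ∫ x in Set.Ioi (0:ℝ), |k x|) * (∫ x in Set.Ioi (0:ℝ), |y x|) ^ 2 ≤
      ∫ t in (0:ℝ)..T, (∫ x in Set.Ioi (0:ℝ), |rightShift t y x|) *
        ∫ x in Set.Ioi (0:ℝ), (1 + k x) * |rightShift t y x|) ∧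
    (1 ≤ T → 0 < T - ∫ x in Set.Ioi (0:ℝ), |k x|) := by
  set K : ℝ := ∫ x in Set.Ioi (0:ℝ), |k x| with hKdef
  set Y : ℝ := ∫ x in Set.Ioi (0:ℝ), |y x| with hYdef
  -- measurable representatives
  set y' : ℝ → ℝ := hy.1.mk y with hy'def
  have hy'm : StronglyMeasurable y' := hy.1.stronglyMeasurable_mk
  have hy'e : y =ᵐ[volume.restrict (Set.Ioi 0)] y' := hy.1.ae_eq_mk
  set k' : ℝ → ℝ := hk.1.mk k with hk'def
  have hk'm : StronglyMeasurable k' := hk.1.stronglyMeasurable_mk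
  have hk'e : k =ᵐ[volume.restrict (Set.Ioi 0)] k' := hk.1.ae_eq_mk
  set Z : ℝ → ℝ := Set.indicator (Set.Ioi 0) (fun x => |y' x|) with hZdef
  set K0 : ℝ → ℝ := Set.indicator (Set.Ioi 0) k' with hK0def
  have hZm : Measurable Z := (hy'm.measurable.abs).indicator measurableSet_Ioi
  have hK0m : Measurable K0 := hk'm.measurable.indicator measurableSet_Ioi
  have hZ0 : ∀ x, 0 ≤ Z x := fun x =>
    Set.indicator_nonneg (fun x _ => abs_nonneg (y' x)) x
  have hZzero : ∀ x : ℝ, x ≤ 0 → Z x = 0 := by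
    intro x hx
    exact Set.indicator_of_notMem (by simpa using hx) _
  have hZint : Integrable Z volume :=
    IntegrableOn.integrable_indicator ((hy.congr hy'e).abs) measurableSet_Ioi
  have hK0int : Integrable K0 volume :=
    IntegrableOn.integrable_indicator (hk.congr hk'e) measurableSet_Ioi
  have hYeq : (∫ x, Z x ∂volume) = Y := by
    rw [hZdef, integral_indicator measurableSet_Ioi]
    refine integral_congr_ae ?_
    filter_upwards [hy'e] with x hx
    rw [hx]
  have hKeq : (∫ x, |K0 x| ∂volume) = K := by
    have : (fun x => |K0 x|) = Set.indicator (Set.Ioi 0) (fun x => |k' x|) := by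
      funext x
      by_cases hx : x ∈ Set.Ioi (0:ℝ)
      · simp [hK0def, Set.indicator_of_mem hx]
      · simp [hK0def, Set.indicator_of_notMem hx]
    rw [this, integral_indicator measurableSet_Ioi]
    refine integral_congr_ae ?_
    filter_upwards [hk'e] with x hx
    rw [hx]
  have hY0 : 0 ≤ Y := by
    rw [← hYeq]; exact integral_nonneg hZ0
  have hK0' : 0 ≤ K := setIntegral_nonneg measurableSet_Ioi fun x _ => abs_nonneg _
  -- a.e. identification of the shifted integrands, for each t > 0
  have haeY : ∀ t : ℝ, 0 < t →
      (fun x => |rightShift t y x|) =ᵐ[volume.restrict (Set.Ioi 0)] fun x => Z (x - t) := by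
    intro t ht
    have hN : ∀ᵐ x ∂(volume : Measure ℝ), x ∈ Set.Ioi (0:ℝ) → y x = y' x :=
      (ae_restrict_iff' measurableSet_Ioi).1 hy'e
    have hshift : ∀ᵐ x ∂(volume : Measure ℝ),
        x - t ∈ Set.Ioi (0:ℝ) → y (x - t) = y' (x - t) :=
      ((measurePreserving_sub_right volume t).quasiMeasurePreserving.tendsto_ae).eventually hN
    have hxt : ∀ᵐ x ∂(volume : Measure ℝ), x ≠ t := by
      rw [ae_iff]
      simp only [not_not]
      rw [Set.setOf_eq_eq_singleton]
      exact measure_singleton t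
    filter_upwards [ae_restrict_of_ae hshift, ae_restrict_of_ae hxt] with x h1 h2
    by_cases hle : t ≤ x
    · have hlt : t < x := lt_of_le_of_ne hle (Ne.symm h2)
      have hmem : x - t ∈ Set.Ioi (0:ℝ) := by simpa using hlt
      rw [rightShift, if_pos hle, h1 hmem, hZdef, Set.indicator_of_mem hmem]
    · rw [rightShift, if_neg hle, abs_zero, hZzero _ (by linarith [lt_of_not_ge hle])]
  have haeK : ∀ t : ℝ, 0 < t →
      (fun x => (1 + k x) * |rightShift t y x|) =ᵐ[volume.restrict (Set.Ioi 0)]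
        fun x => (1 + K0 x) * Z (x - t) := by
    intro t ht
    filter_upwards [haeY t ht, hk'e, ae_restrict_mem measurableSet_Ioi] with x h1 h2 hx
    rw [h1, h2, hK0def, Set.indicator_of_mem hx]
  -- the first factor equals Y
  have step1 : ∀ t : ℝ, 0 < t → (∫ x in Set.Ioi (0:ℝ), |rightShift t y x|) = Y := by
    intro t ht
    rw [integral_congr_ae (haeY t ht)]
    rw [setIntegral_eq_integral_of_forall_compl_eq_zero
      (fun x hx => hZzero _ (by simp at hx; linarith))]
    rw [integral_sub_right_eq_self Z t, hYeq]
  -- the second factor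
  have hZshift_int : ∀ t : ℝ, Integrable (fun x => Z (x - t)) volume := fun t =>
    ((measurePreserving_sub_right volume t).integrable_comp hZint.1).2 hZint
  have step2 : ∀ t : ℝ, 0 < t → Integrable (fun x => K0 x * Z (x - t)) volume →
      (∫ x in Set.Ioi (0:ℝ), (1 + k x) * |rightShift t y x|) =
        Y + ∫ x, K0 x * Z (x - t) ∂volume := by
    intro t ht hint
    rw [integral_congr_ae (haeK t ht)]
    rw [setIntegral_eq_integral_of_forall_compl_eq_zero
      (fun x hx => by rw [hZzero (x - t) (by simp at hx; linarith)]; ring)]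
    have : (fun x => (1 + K0 x) * Z (x - t)) =
        fun x => Z (x - t) + K0 x * Z (x - t) := by funext x; ring
    rw [this, integral_add (hZshift_int t) hint, integral_sub_right_eq_self Z t, hYeq]
  -- product integrability and the Fubini bound
  set μT : Measure ℝ := volume.restrict (Set.Ioc 0 T) with hμT
  set P : ℝ × ℝ → ℝ := fun p => K0 p.2 * Z (p.2 - p.1) with hPdef
  have hPm : Measurable P :=
    (hK0m.comp measurable_snd).mul (hZm.comp (measurable_snd.sub measurable_fst))
  have hZlint : ∫⁻ s, (‖Z s‖₊ : ENNReal) ∂volume = ENNReal.ofReal Y := by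
    have h1 : ∀ s, (‖Z s‖₊ : ENNReal) = ENNReal.ofReal (Z s) := fun s => by
      rw [← enorm_eq_nnnorm, ← ofReal_norm, Real.norm_of_nonneg (hZ0 s)]
    simp_rw [h1]
    rw [← ofReal_integral_eq_lintegral_ofReal hZint (Filter.Eventually.of_forall hZ0), hYeq]
  have hKlint : ∫⁻ x, (‖K0 x‖₊ : ENNReal) ∂volume = ENNReal.ofReal K := by
    have h1 : ∀ s, (‖K0 s‖₊ : ENNReal) = ENNReal.ofReal |K0 s| := fun s => by
      rw [← enorm_eq_nnnorm, ← ofReal_norm, Real.norm_eq_abs]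
    simp_rw [h1]
    rw [← ofReal_integral_eq_lintegral_ofReal hK0int.abs
      (Filter.Eventually.of_forall fun x => abs_nonneg _), hKeq]
  have hlint : ∫⁻ p, (‖P p‖₊ : ENNReal) ∂(μT.prod volume) ≤
      ENNReal.ofReal K * ENNReal.ofReal Y := by
    rw [lintegral_prod_symm' (f := fun p => (‖P p‖₊ : ENNReal)) hPm.enorm]
    have hb : ∀ x : ℝ, (∫⁻ t, (‖P (t, x)‖₊ : ENNReal) ∂μT) ≤
        (‖K0 x‖₊ : ENNReal) * ENNReal.ofReal Y := by
      intro x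
      have : ∀ t : ℝ, (‖P (t, x)‖₊ : ENNReal) =
          (‖K0 x‖₊ : ENNReal) * (‖Z (x - t)‖₊ : ENNReal) := by
        intro t; rw [hPdef]; simp [nnnorm_mul]
      simp_rw [this]
      rw [lintegral_const_mul' _ _ ENNReal.coe_ne_top]
      refine mul_le_mul_right ?_ _
      calc ∫⁻ t, (‖Z (x - t)‖₊ : ENNReal) ∂μT
          ≤ ∫⁻ t, (‖Z (x - t)‖₊ : ENNReal) ∂volume :=
            lintegral_mono' Measure.restrict_le_self le_rfl
        _ = ENNReal.ofReal Y := by rw [lint_shift Z hZm x, hZlint]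
    calc ∫⁻ x, (∫⁻ t, (‖P (t, x)‖₊ : ENNReal) ∂μT) ∂volume
        ≤ ∫⁻ x, (‖K0 x‖₊ : ENNReal) * ENNReal.ofReal Y ∂volume := lintegral_mono hb
      _ = ENNReal.ofReal K * ENNReal.ofReal Y := by
          rw [lintegral_mul_const' _ _ ENNReal.ofReal_ne_top, hKlint]
  have hPint : Integrable P (μT.prod volume) := by
    exact ⟨hPm.aestronglyMeasurable, lt_of_le_of_lt hlint (by finiteness)⟩
  have hg_int : Integrable (fun t => ∫ x, P (t, x) ∂volume) μT := hPint.integral_prod_left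
  have hgae : ∀ᵐ t ∂μT, Integrable (fun x => P (t, x)) volume := hPint.prod_right_ae
  -- bound on the correction term
  have hg_bound : |∫ t, (∫ x, P (t, x) ∂volume) ∂μT| ≤ K * Y := by
    calc |∫ t, (∫ x, P (t, x) ∂volume) ∂μT|
        ≤ ∫ t, ‖∫ x, P (t, x) ∂volume‖ ∂μT := by
          rw [← Real.norm_eq_abs]; exact norm_integral_le_integral_norm _
      _ ≤ ∫ t, (∫ x, ‖P (t, x)‖ ∂volume) ∂μT := by
          refine integral_mono hg_int.norm hPint.norm.integral_prod_left fun t => ?_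
          exact norm_integral_le_integral_norm _
      _ = ∫ p, ‖P p‖ ∂(μT.prod volume) := (integral_prod _ hPint.norm).symm
      _ = (∫⁻ p, (‖P p‖₊ : ENNReal) ∂(μT.prod volume)).toReal :=
          integral_norm_eq_lintegral_enorm hPm.aestronglyMeasurable
      _ ≤ (ENNReal.ofReal K * ENNReal.ofReal Y).toReal :=
          ENNReal.toReal_mono (by finiteness) hlint
      _ = K * Y := by
          rw [ENNReal.toReal_mul, ENNReal.toReal_ofReal hK0', ENNReal.toReal_ofReal hY0]
  refine ⟨?_, fun h1T => by linarith⟩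
  -- assemble
  have hIoc : (∫ t in (0:ℝ)..T, (∫ x in Set.Ioi (0:ℝ), |rightShift t y x|) *
        ∫ x in Set.Ioi (0:ℝ), (1 + k x) * |rightShift t y x|) =
      ∫ t, ((∫ x in Set.Ioi (0:ℝ), |rightShift t y x|) *
        ∫ x in Set.Ioi (0:ℝ), (1 + k x) * |rightShift t y x|) ∂μT :=
    intervalIntegral.integral_of_le hT.le
  rw [hIoc]
  have hcongr : (fun t => (∫ x in Set.Ioi (0:ℝ), |rightShift t y x|) *
        ∫ x in Set.Ioi (0:ℝ), (1 + k x) * |rightShift t y x|) =ᵐ[μT]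
      fun t => Y * Y + Y * (∫ x, P (t, x) ∂volume) := by
    filter_upwards [hgae, ae_restrict_mem measurableSet_Ioc] with t hint ht
    rw [step1 t ht.1, step2 t ht.1 hint]
    ring
  rw [integral_congr_ae hcongr]
  rw [integral_add (integrable_const _) (hg_int.const_mul Y)]
  rw [integral_const]
  have hvol : (μT Set.univ).toReal = T := by
    rw [hμT, Measure.restrict_apply_univ, Real.volume_Ioc, sub_zero,
      ENNReal.toReal_ofReal hT.le]
  rw [integral_const_mul, smul_eq_mul, Measure.real, hvol]
  have h1 : -(K * Y) ≤ ∫ t, (∫ x, P (t, x) ∂volume) ∂μT := (abs_le.1 hg_bound).1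
  nlinarith [mul_le_mul_of_nonneg_left h1 hY0]
end

section
/- Let y : [0,1] → ℝ be continuously differentiable with y'(0) = y'(1) = 0, let s₀ maximize |y| on [0,1], and let φ = y(s₀)δ_{s₀} be the corresponding duality element. Then φ(y + y') = ‖y‖²_∞, i.e., ⟨(I + ∂_x)y, J(y)⟩ = ‖y‖² for this choice of duality element. -/
/-- Coercivity identity `⟨(I + ∂ₓ)y, J(y)⟩ = ‖y‖²` for the duality element
`φ = y(s₀) δ_{s₀}`: if `y` is `C¹` with `y'(0) = y'(1) = 0` and `s₀` maximizes `|y|`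
on `[0,1]`, then `y(s₀)·(y(s₀) + y'(s₀)) = ‖y‖∞²`. -/
theorem stmt_14 (y : ℝ → ℝ) (hy : ContDiff ℝ 1 y)
    (h0 : deriv y 0 = 0) (h1 : deriv y 1 = 0)
    (s₀ : ℝ) (hs₀ : s₀ ∈ Set.Icc (0:ℝ) 1)
    (hmax : ∀ s ∈ Set.Icc (0:ℝ) 1, |y s| ≤ |y s₀|) :
    y s₀ * (y s₀ + deriv y s₀) = (sSup ((fun s => |y s|) '' Set.Icc (0:ℝ) 1)) ^ 2 := by
  have hdiff : Differentiable ℝ y := hy.differentiable one_ne_zero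
  have hsup : sSup ((fun s => |y s|) '' Set.Icc (0:ℝ) 1) = |y s₀| := by
    apply IsGreatest.csSup_eq
    constructor
    · exact ⟨s₀, hs₀, rfl⟩
    · rintro _ ⟨s, hs, rfl⟩; exact hmax s hs
  rw [hsup]
  have key : y s₀ * deriv y s₀ = 0 := by
    rcases eq_or_ne s₀ 0 with rfl | hne0
    · rw [h0]; ring
    rcases eq_or_ne s₀ 1 with rfl | hne1
    · rw [h1]; ring
    have hio : s₀ ∈ Set.Ioo (0:ℝ) 1 :=
      ⟨lt_of_le_of_ne hs₀.1 (Ne.symm hne0), lt_of_le_of_ne hs₀.2 hne1⟩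
    have hloc : IsLocalMax (fun s => (y s) ^ 2) s₀ := by
      filter_upwards [Ioo_mem_nhds hio.1 hio.2] with s hs
      have := hmax s ⟨hs.1.le, hs.2.le⟩
      calc (y s)^2 = |y s|^2 := (sq_abs _).symm
        _ ≤ |y s₀|^2 := pow_le_pow_left₀ (abs_nonneg _) this 2
        _ = (y s₀)^2 := sq_abs _
    have hd : deriv (fun s => (y s) ^ 2) s₀ = 0 := hloc.deriv_eq_zero
    have h2 : deriv (fun s => (y s) ^ 2) s₀ = 2 * y s₀ ^ 1 * deriv y s₀ :=
      ((hdiff s₀).hasDerivAt.pow 2).deriv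
    rw [h2, pow_one] at hd
    linarith
  rw [sq_abs]
  ring_nf
  linarith [key]
end
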